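/- Let F be a field and let e' and e be two matrices in 𝔰𝔭₄(F) each of which is zero except for its bottom-left 2×2 block, with those blocks being B' and B respectively (both symmetric with respect to the pairing, i.e., of the form [[b,a],[c,b]]). If the binary quadratic forms determined by B' and B (via (X,Y) ↦ ⟨X, e' Y⟩ and (X,Y) ↦ ⟨X, e Y⟩ on span(v₁,v₂)) are isometric, then e' and e are conjugate under Sp₄(F). -/

import Mathlib

open Matrix

/-- The Gram matrix of the symplectic form
`⟨x,y⟩ = x₁y₄ + x₂y₃ − x₃y₂ − x₄y₁` on `F⁴`. -/
def sympJ (F : Type*) [Field F] : Matrix (Fin 4) (Fin 4) F :=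
  !![0, 0, 0, 1; 0, 0, 1, 0; 0, -1, 0, 0; -1, 0, 0, 0]

private theorem vec4_eq' {α : Type*} {a₀ a₁ a₂ a₃ b₀ b₁ b₂ b₃ : α}
    (h₀ : a₀ = b₀) (h₁ : a₁ = b₁) (h₂ : a₂ = b₂) (h₃ : a₃ = b₃) :
    ![a₀, a₁, a₂, a₃] = ![b₀, b₁, b₂, b₃] := by
  subst_vars; rfl

private theorem mul_fin_four' {α : Type*} [AddCommMonoid α] [Mul α]
    (a₁₁ a₁₂ a₁₃ a₁₄ a₂₁ a₂₂ a₂₃ a₂₄ a₃₁ a₃₂ a₃₃ a₃₄ a₄₁ a₄₂ a₄₃ a₄₄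
     b₁₁ b₁₂ b₁₃ b₁₄ b₂₁ b₂₂ b₂₃ b₂₄ b₃₁ b₃₂ b₃₃ b₃₄ b₄₁ b₄₂ b₄₃ b₄₄ : α) :
    !![a₁₁, a₁₂, a₁₃, a₁₄; a₂₁, a₂₂, a₂₃, a₂₄; a₃₁, a₃₂, a₃₃, a₃₄; a₄₁, a₄₂, a₄₃, a₄₄] *
    !![b₁₁, b₁₂, b₁₃, b₁₄; b₂₁, b₂₂, b₂₃, b₂₄; b₃₁, b₃₂, b₃₃, b₃₄; b₄₁, b₄₂, b₄₃, b₄₄] =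
    !![a₁₁*b₁₁ + a₁₂*b₂₁ + a₁₃*b₃₁ + a₁₄*b₄₁, a₁₁*b₁₂ + a₁₂*b₂₂ + a₁₃*b₃₂ + a₁₄*b₄₂,
       a₁₁*b₁₃ + a₁₂*b₂₃ + a₁₃*b₃₃ + a₁₄*b₄₃, a₁₁*b₁₄ + a₁₂*b₂₄ + a₁₃*b₃₄ + a₁₄*b₄₄;
       a₂₁*b₁₁ + a₂₂*b₂₁ + a₂₃*b₃₁ + a₂₄*b₄₁, a₂₁*b₁₂ + a₂₂*b₂₂ + a₂₃*b₃₂ + a₂₄*b₄₂,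
       a₂₁*b₁₃ + a₂₂*b₂₃ + a₂₃*b₃₃ + a₂₄*b₄₃, a₂₁*b₁₄ + a₂₂*b₂₄ + a₂₃*b₃₄ + a₂₄*b₄₄;
       a₃₁*b₁₁ + a₃₂*b₂₁ + a₃₃*b₃₁ + a₃₄*b₄₁, a₃₁*b₁₂ + a₃₂*b₂₂ + a₃₃*b₃₂ + a₃₄*b₄₂,
       a₃₁*b₁₃ + a₃₂*b₂₃ + a₃₃*b₃₃ + a₃₄*b₄₃, a₃₁*b₁₄ + a₃₂*b₂₄ + a₃₃*b₃₄ + a₃₄*b₄₄;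
       a₄₁*b₁₁ + a₄₂*b₂₁ + a₄₃*b₃₁ + a₄₄*b₄₁, a₄₁*b₁₂ + a₄₂*b₂₂ + a₄₃*b₃₂ + a₄₄*b₄₂,
       a₄₁*b₁₃ + a₄₂*b₂₃ + a₄₃*b₃₃ + a₄₄*b₄₃, a₄₁*b₁₄ + a₄₂*b₂₄ + a₄₃*b₃₄ + a₄₄*b₄₄] := by
  ext i j
  fin_cases i <;> fin_cases j <;>
    simp [Matrix.mul_apply, Fin.sum_univ_succ, ← add_assoc]

private theorem one_fin_four' {α : Type*} [Zero α] [One α] :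
    (1 : Matrix (Fin 4) (Fin 4) α) = !![1,0,0,0; 0,1,0,0; 0,0,1,0; 0,0,0,1] := by
  ext i j
  fin_cases i <;> fin_cases j <;> simp [Matrix.one_apply, Matrix.vecHead, Matrix.vecTail]

private theorem transpose_fin_four' {α : Type*}
    (a₁₁ a₁₂ a₁₃ a₁₄ a₂₁ a₂₂ a₂₃ a₂₄ a₃₁ a₃₂ a₃₃ a₃₄ a₄₁ a₄₂ a₄₃ a₄₄ : α) :
    (!![a₁₁, a₁₂, a₁₃, a₁₄; a₂₁, a₂₂, a₂₃, a₂₄; a₃₁, a₃₂, a₃₃, a₃₄; a₄₁, a₄₂, a₄₃, a₄₄])ᵀ =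
    !![a₁₁, a₂₁, a₃₁, a₄₁; a₁₂, a₂₂, a₃₂, a₄₂; a₁₃, a₂₃, a₃₃, a₄₃; a₁₄, a₂₄, a₃₄, a₄₄] := by
  ext i j
  fin_cases i <;> fin_cases j <;> rfl

/-- Let `F` be a field of characteristic ≠ 2, and let
`e' = e_{a',b',c'}` and `e = e_{a,b,c}` be elements of `𝔰𝔭₄(F)` that vanish outside their
bottom-left `2 × 2` blocks `!![b', a'; c', b']` and `!![b, a; c, b]`.  If the binary
quadratic forms determined by these blocks (with Gram matrices `!![c', b'; b', a']` and
`!![c, b; b, a]`) are isometric, then `e'` and `e` are conjugate under `Sp₄(F)`. -/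
theorem stmt14 {F : Type*} [Field F] (hchar : ringChar F ≠ 2) (a b c a' b' c' : F)
    (hiso : ∃ h : Matrix (Fin 2) (Fin 2) F, IsUnit h.det ∧
      hᵀ * !![c', b'; b', a'] * h = !![c, b; b, a]) :
    ∃ g : Matrix (Fin 4) (Fin 4) F, IsUnit g.det ∧ gᵀ * sympJ F * g = sympJ F ∧
      g * !![0, 0, 0, 0; 0, 0, 0, 0; b', a', 0, 0; c', b', 0, 0] * g⁻¹ =
        !![0, 0, 0, 0; 0, 0, 0, 0; b, a, 0, 0; c, b, 0, 0] := by
  obtain ⟨h, hdet, heq⟩ := hiso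
  have hd : h 0 0 * h 1 1 - h 0 1 * h 1 0 ≠ 0 := by
    rw [Matrix.det_fin_two, isUnit_iff_ne_zero] at hdet
    simpa using hdet
  obtain ⟨p, q, r, s, hps⟩ :
      ∃ p q r s : F, h = !![p, q; r, s] := ⟨_, _, _, _, Matrix.eta_fin_two h⟩
  subst hps
  simp only [Matrix.cons_val', Matrix.cons_val_zero, Matrix.cons_val_one, Matrix.head_cons,
    Matrix.empty_val', Matrix.cons_val_fin_one, Matrix.head_fin_const, Matrix.of_apply] at hd
  obtain ⟨t, htd⟩ : ∃ t, (p * s - q * r) * t = 1 := ⟨_, mul_inv_cancel₀ hd⟩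
  rw [show (!![p, q; r, s])ᵀ = !![p, r; q, s] from by
    ext i j; fin_cases i <;> fin_cases j <;> rfl] at heq
  have E : ∀ i j, (!![p, r; q, s] * !![c', b'; b', a'] * !![p, q; r, s]) i j
      = !![c, b; b, a] i j := fun i j => by rw [heq]
  have e00 := E 0 0
  have e01 := E 0 1
  have e10 := E 1 0
  have e11 := E 1 1
  simp [Matrix.mul_apply, Fin.sum_univ_two] at e00 e01 e10 e11
  refine ⟨!![s*t, -(q*t), 0, 0; -(r*t), p*t, 0, 0; 0, 0, s, q; 0, 0, r, p], ?_, ?_, ?_⟩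
  case refine_2 =>
    rw [sympJ, transpose_fin_four', mul_fin_four', mul_fin_four']
    refine congrArg Matrix.of
      (vec4_eq' (vec4_eq' ?_ ?_ ?_ ?_) (vec4_eq' ?_ ?_ ?_ ?_)
        (vec4_eq' ?_ ?_ ?_ ?_) (vec4_eq' ?_ ?_ ?_ ?_)) <;>
      first
        | ring1
        | linear_combination htd
        | linear_combination -htd
  all_goals
    have hmul : !![s*t, -(q*t), 0, 0; -(r*t), p*t, 0, 0; 0, 0, s, q; 0, 0, r, p] *
        !![p, q, 0, 0; r, s, 0, 0; 0, 0, p*t, -(q*t); 0, 0, -(r*t), s*t] = 1 := by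
      rw [mul_fin_four', one_fin_four']
      refine congrArg Matrix.of
        (vec4_eq' (vec4_eq' ?_ ?_ ?_ ?_) (vec4_eq' ?_ ?_ ?_ ?_)
          (vec4_eq' ?_ ?_ ?_ ?_) (vec4_eq' ?_ ?_ ?_ ?_)) <;>
        first
          | ring1
          | linear_combination htd
  case refine_1 =>
    exact IsUnit.of_mul_eq_one _
      (by rw [← Matrix.det_mul, hmul, Matrix.det_one])
  case refine_3 =>
    rw [Matrix.inv_eq_right_inv hmul, mul_fin_four', mul_fin_four']
    refine congrArg Matrix.of
      (vec4_eq' (vec4_eq' ?_ ?_ ?_ ?_) (vec4_eq' ?_ ?_ ?_ ?_)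
        (vec4_eq' ?_ ?_ ?_ ?_) (vec4_eq' ?_ ?_ ?_ ?_)) <;>
      first
        | ring1
        | linear_combination e00
        | linear_combination e01
        | linear_combination e10
        | linear_combination e11
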